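/- Let R be a unital ring and r ∈ R with ad_r surjective. Then for every 3×3 matrix A over R there exists a strictly upper triangular matrix T such that the diagonal of A - U(r) T U(r)⁻¹ is zero, where U(r) is the matrix with rows (r,1,1),(1,1,0),(1,0,0). -/
import Mathlib


theorem stmt_12 (R : Type*) [Ring R] (r : R)
    (h : Function.Surjective (fun s => r * s - s * r)) :
    ∀ A : Matrix (Fin 3) (Fin 3) R, ∃ T : Matrix (Fin 3) (Fin 3) R,
      (∀ i j : Fin 3, j ≤ i → T i j = 0) ∧
      (∀ i : Fin 3,
        (A - !![r, 1, 1; 1, 1, 0; 1, 0, 0] * T *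
          !![0, 0, 1; 0, 1, -1; 1, -1, 1 - r]) i i = 0) := by
  intro A
  obtain ⟨b, hb⟩ := h (A 0 0 + A 1 1 + A 2 2)
  simp only at hb
  set c := A 0 0 - r * b with hc
  set a := A 1 1 + b + c with ha
  refine ⟨!![0, a, b; 0, 0, c; 0, 0, 0], ?_, ?_⟩
  · intro i j hij
    fin_cases i <;> fin_cases j <;> first | exact absurd hij (by decide) | simp [Matrix.vecHead, Matrix.vecTail]
  · intro i
    fin_cases i <;>
      simp [Matrix.sub_apply, Matrix.mul_apply, Fin.sum_univ_three, ha, hc]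
    · noncomm_ring
    · have h2 : A 2 2 = r * b - b * r - A 0 0 - A 1 1 := by rw [hb]; noncomm_ring
      rw [h2]; noncomm_ring
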